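/- If D is a connected k-dominating set of a connected graph G, then rx_k(G) ≤ |D| + k - 1; in particular rx_k(G) ≤ γ_k^c(G) + k - 1, where γ_k^c(G) is the connected k-domination number. -/

import Mathlib

open SimpleGraph

/-- An edge-coloring `c` is a `k`-rainbow coloring of `G` if every set of `k` vertices
is connected by a rainbow tree (here: a connected subgraph whose edges receive
pairwise distinct colors). -/
def IsKRainbowColoring {V : Type*} (G : SimpleGraph V) (k : ℕ) (c : Sym2 V → ℕ) : Prop :=
  ∀ S : Finset V, S.card = k →
    ∃ T : G.Subgraph, T.Connected ∧ ↑S ⊆ T.verts ∧ Set.InjOn c T.edgeSet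

/-- The `k`-rainbow index: minimum number of colors in a `k`-rainbow coloring. -/
noncomputable def rxk {V : Type*} (G : SimpleGraph V) (k : ℕ) : ℕ :=
  sInf {m | ∃ c : Sym2 V → ℕ, (∀ e ∈ G.edgeSet, c e < m) ∧ IsKRainbowColoring G k c}

/-- `D` is a connected `k`-dominating set of `G`. -/
def IsConnKDom {V : Type*} (G : SimpleGraph V) (k : ℕ) (D : Finset V) : Prop :=
  (G.induce (↑D : Set V)).Connected ∧
    ∀ v : V, v ∉ D → k ≤ ((↑D : Set V) ∩ G.neighborSet v).ncard

/-- The connected `k`-domination number. -/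
noncomputable def gammakc {V : Type*} (G : SimpleGraph V) (k : ℕ) : ℕ :=
  sInf {m | ∃ D : Finset V, D.card = m ∧ IsConnKDom G k D}

/-! ### Auxiliary constructions -/

open scoped Classical in
/-- The neighbors of `v` lying in `D`. -/
noncomputable def DvSet {V : Type*} (G : SimpleGraph V) (D : Finset V) (v : V) : Finset V :=
  D.filter (fun d => G.Adj v d)

open scoped Classical in
/-- The position of `d` in an enumeration of the neighbors of `v` in `D`. -/
noncomputable def posIn {V : Type*} (G : SimpleGraph V) (D : Finset V) (v d : V) : ℕ :=
  if h : d ∈ DvSet G D v then ((DvSet G D v).equivFin ⟨d, h⟩ : Fin _) else 0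

open scoped Classical in
/-- The `j`-th neighbor of `v` in `D`. -/
noncomputable def nbr {V : Type*} (G : SimpleGraph V) (D : Finset V) (v : V) (j : ℕ) : V :=
  if h : j < (DvSet G D v).card then ((DvSet G D v).equivFin.symm ⟨j, h⟩ : V) else v

lemma nbr_mem {V : Type*} (G : SimpleGraph V) (D : Finset V) (v : V) {j : ℕ}
    (h : j < (DvSet G D v).card) : nbr G D v j ∈ DvSet G D v := by
  simp only [nbr]
  rw [dif_pos h]
  exact ((DvSet G D v).equivFin.symm ⟨j, h⟩).2

lemma posIn_nbr {V : Type*} (G : SimpleGraph V) (D : Finset V) (v : V) {j : ℕ}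
    (h : j < (DvSet G D v).card) : posIn G D v (nbr G D v j) = j := by
  have hm : nbr G D v j ∈ DvSet G D v := nbr_mem G D v h
  simp only [posIn]
  rw [dif_pos hm]
  have : (⟨nbr G D v j, hm⟩ : {x // x ∈ DvSet G D v}) = (DvSet G D v).equivFin.symm ⟨j, h⟩ := by
    apply Subtype.ext
    simp only [nbr]
    rw [dif_pos h]
  rw [this, Equiv.apply_symm_apply]

open scoped Classical in
/-- Cross-edge colors. -/
noncomputable def ccAux {V : Type*} (G : SimpleGraph V) (D : Finset V) (k n : ℕ) (v d : V) : ℕ :=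
  if posIn G D v d < k then (n - 1) + posIn G D v d else 0

open scoped Classical in
noncomputable def crossF {V : Type*} (G : SimpleGraph V) (D : Finset V) (k n : ℕ) :
    Sym2 V → ℕ :=
  Sym2.lift ⟨fun a b =>
    if a ∈ D then (if b ∈ D then 0 else ccAux G D k n b a)
    else (if b ∈ D then ccAux G D k n a b else 0), by
      intro a b
      by_cases ha : a ∈ D <;> by_cases hb : b ∈ D <;> simp [ha, hb]⟩

open scoped Classical in
/-- The full coloring. -/
noncomputable def ccol {V : Type*} (G : SimpleGraph V) (D : Finset V) (k n : ℕ)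
    (g : ℕ → V) (prev : ℕ → ℕ) (e : Sym2 V) : ℕ :=
  if h : ∃ i, 0 < i ∧ i < n ∧ e = s(g i, g (prev i)) then h.choose - 1 else crossF G D k n e

open scoped Classical in
/-- A connected ordering of the vertices of `D`. -/
lemma exists_conn_order {V : Type*} [Fintype V] (G : SimpleGraph V) (D : Finset V)
    (h : (G.induce (↑D : Set V)).Connected) :
    ∃ l : List V, l ≠ [] ∧ l.Nodup ∧ l.toFinset = D ∧
      ∀ i : ℕ, 0 < i → ∀ hi : i < l.length, ∃ j : ℕ, ∃ hj : j < l.length,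
        j < i ∧ G.Adj (l[i]'hi) (l[j]'hj) := by
  classical
  obtain ⟨⟨d0, hd0⟩⟩ := h.nonempty
  have hd0D : d0 ∈ D := by simpa using hd0
  set P : List V → Prop := fun l => ∀ i : ℕ, 0 < i → ∀ hi : i < l.length, ∃ j : ℕ,
      ∃ hj : j < l.length, j < i ∧ G.Adj (l[i]'hi) (l[j]'hj) with hP
  suffices key : ∀ m (l : List V), l ≠ [] → l.Nodup → l.toFinset ⊆ D → P l →
      (D \ l.toFinset).card = m → ∃ l', l' ≠ [] ∧ l'.Nodup ∧ l'.toFinset = D ∧ P l' by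
    refine key (D \ [d0].toFinset).card [d0] (by simp) (by simp) (by simpa using hd0D) ?_ rfl
    intro i hi hlt
    simp only [List.length_singleton] at hlt
    omega
  intro m
  induction m with
  | zero =>
    intro l hne hnd hsub hPl hcard
    refine ⟨l, hne, hnd, ?_, hPl⟩
    have hempty : D \ l.toFinset = ∅ := Finset.card_eq_zero.mp hcard
    exact Finset.Subset.antisymm (Finset.sdiff_eq_empty_iff_subset.mp hempty) hsub |>.symm
  | succ m ih =>
    intro l hne hnd hsub hPl hcard
    have hcard' : 0 < (D \ l.toFinset).card := by omega
    obtain ⟨w, hw⟩ := Finset.card_pos.mp hcard'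
    have hwD : w ∈ D := (Finset.mem_sdiff.mp hw).1
    have hwl : w ∉ l.toFinset := (Finset.mem_sdiff.mp hw).2
    have ha : l.head hne ∈ l.toFinset := List.mem_toFinset.mpr (List.head_mem hne)
    have haD : l.head hne ∈ D := hsub ha
    obtain ⟨p⟩ := h.preconnected ⟨l.head hne, by simpa using haD⟩ ⟨w, by simpa using hwD⟩
    obtain ⟨dart, _, hdf, hds⟩ :=
      p.exists_boundary_dart {x : ↥(↑D : Set V) | (x : V) ∈ l.toFinset} ha hwl
    have hxy : G.Adj (dart.fst : V) (dart.snd : V) := dart.adj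
    have hyD : (dart.snd : V) ∈ D := by simpa using (dart.snd).2
    have hxl : (dart.fst : V) ∈ l.toFinset := hdf
    have hyl : (dart.snd : V) ∉ l.toFinset := hds
    set y : V := (dart.snd : V) with hy
    refine ih (l ++ [y]) (by simp) ?_ ?_ ?_ ?_
    · rw [List.nodup_append]
      refine ⟨hnd, List.nodup_singleton y, ?_⟩
      intro z hz b hb hzy
      rw [List.mem_singleton] at hb
      subst hb
      subst hzy
      exact hyl (List.mem_toFinset.mpr hz)
    · intro z hz
      rw [List.toFinset_append] at hz
      rcases Finset.mem_union.mp hz with hz | hz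
      · exact hsub hz
      · simp only [List.toFinset_cons, List.toFinset_nil, LawfulSingleton.insert_empty_eq,
          Finset.mem_singleton] at hz
        subst hz
        exact hyD
    · intro i hi0 hi
      rw [List.length_append, List.length_singleton] at hi
      by_cases hil : i < l.length
      · obtain ⟨j, hj, hji, hadj⟩ := hPl i hi0 hil
        refine ⟨j, by rw [List.length_append, List.length_singleton]; omega, hji, ?_⟩
        rw [List.getElem_append_left hil, List.getElem_append_left hj]
        exact hadj
      · have hieq : i = l.length := by omega
        obtain ⟨j, hj, hlj⟩ := List.getElem_of_mem (List.mem_toFinset.mp hxl)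
        refine ⟨j, by rw [List.length_append, List.length_singleton]; omega, by omega, ?_⟩
        rw [List.getElem_concat_length hieq, List.getElem_append_left hj, hlj]
        exact hxy.symm
    · rw [List.toFinset_append]
      have h1 : [y].toFinset = {y} := by simp
      rw [h1]
      have h2 : D \ (l.toFinset ∪ {y}) = (D \ l.toFinset).erase y := by
        ext z
        simp only [Finset.mem_sdiff, Finset.mem_union, Finset.mem_singleton, Finset.mem_erase]
        tauto
      rw [h2, Finset.card_erase_of_mem (Finset.mem_sdiff.mpr ⟨hyD, hyl⟩), hcard]
      omega

/-- Key lemma: a connected `k`-dominating set bounds the `k`-rainbow index. -/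
lemma rxk_le_of_connKDom {V : Type*} [Fintype V] (G : SimpleGraph V)
    (k : ℕ) (hk : 2 ≤ k) (D : Finset V) (hD : IsConnKDom G k D) :
    rxk G k ≤ D.card + k - 1 := by
  classical
  obtain ⟨l, hne, hnd, hlD, hPl⟩ := exists_conn_order G D hD.1
  set n := l.length with hn
  have hcardD : D.card = n := by rw [← hlD, List.toFinset_card_of_nodup hnd]
  have hnpos : 0 < n := List.length_pos_iff.mpr hne
  set g : ℕ → V := fun i => l.getD i (l.head hne) with hg
  have hgeq : ∀ i (hi : i < n), g i = l[i]'hi := fun i hi => List.getD_eq_getElem l _ hi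
  have hgD : ∀ i, i < n → g i ∈ D := by
    intro i hi
    rw [← hlD]
    apply List.mem_toFinset.mpr
    rw [hgeq i hi]
    exact List.getElem_mem hi
  have hprev0 : ∀ i, ∃ j, 0 < i → i < n → j < i ∧ G.Adj (g i) (g j) := by
    intro i
    by_cases hi : 0 < i ∧ i < n
    · obtain ⟨j, hj, hji, hadj⟩ := hPl i hi.1 hi.2
      exact ⟨j, fun _ _ => ⟨hji, by rw [hgeq i hi.2, hgeq j hj]; exact hadj⟩⟩
    · exact ⟨0, fun h1 h2 => absurd ⟨h1, h2⟩ hi⟩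
  choose prev hprev using hprev0
  set c : Sym2 V → ℕ := ccol G D k n g prev with hc
  have hDvAdj : ∀ v d, d ∈ DvSet G D v → d ∈ D ∧ G.Adj v d := by
    intro v d hd
    simpa [DvSet] using hd
  have hDvcard : ∀ v, v ∉ D → k ≤ (DvSet G D v).card := by
    intro v hv
    have h1 := hD.2 v hv
    have hset : (↑D : Set V) ∩ G.neighborSet v = ↑(DvSet G D v) := by
      ext x
      simp [DvSet, SimpleGraph.mem_neighborSet]
    rwa [hset, Set.ncard_coe_finset] at h1
  have tree_val : ∀ e (h : ∃ i, 0 < i ∧ i < n ∧ e = s(g i, g (prev i))),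
      ∃ i, 0 < i ∧ i < n ∧ e = s(g i, g (prev i)) ∧ c e = i - 1 := by
    intro e h
    refine ⟨h.choose, h.choose_spec.1, h.choose_spec.2.1, h.choose_spec.2.2, ?_⟩
    rw [hc]
    simp only [ccol]
    rw [dif_pos h]
  have cross_val : ∀ a b, a ∉ D → b ∈ D → c (s(a, b)) = ccAux G D k n a b := by
    intro a b ha hb
    have hnt : ¬ ∃ i, 0 < i ∧ i < n ∧ s(a, b) = s(g i, g (prev i)) := by
      rintro ⟨i, hi0, hin, he⟩
      rw [Sym2.eq_iff] at he
      rcases he with ⟨h1, _⟩ | ⟨h1, _⟩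
      · exact ha (h1 ▸ hgD i hin)
      · exact ha (h1 ▸ hgD (prev i) (lt_trans (hprev i hi0 hin).1 hin))
    rw [hc]
    simp only [ccol]
    rw [dif_neg hnt]
    simp only [crossF]
    rw [Sym2.lift_mk]
    simp [ha, hb]
  have hccAux_lt : ∀ x y, ccAux G D k n x y < n + k - 1 := by
    intro x y
    simp only [ccAux]
    split_ifs with h
    · omega
    · omega
  have hbound : ∀ e ∈ G.edgeSet, c e < D.card + k - 1 := by
    intro e _
    rw [hcardD]
    by_cases h : ∃ i, 0 < i ∧ i < n ∧ e = s(g i, g (prev i))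
    · obtain ⟨i, hi0, hin, _, hce⟩ := tree_val e h
      rw [hce]
      omega
    · rw [hc]
      simp only [ccol]
      rw [dif_neg h]
      induction e using Sym2.ind with
      | _ a b =>
        simp only [crossF]
        rw [Sym2.lift_mk]
        dsimp only
        split_ifs
        · omega
        · exact hccAux_lt _ _
        · exact hccAux_lt _ _
        · omega
  have hrainbow : IsKRainbowColoring G k c := by
    intro S hS
    set S' : Finset V := S \ D with hS'def
    have hS'k : S'.card ≤ k := by
      rw [← hS]
      exact Finset.card_le_card (Finset.sdiff_subset)
    set τ : V → ℕ := fun v => if h : v ∈ S' then ((S'.equivFin ⟨v, h⟩ : Fin _) : ℕ) else 0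
      with hτdef
    have hτlt : ∀ v ∈ S', τ v < k := by
      intro v hv
      rw [hτdef]
      simp only [dif_pos hv]
      exact lt_of_lt_of_le (Fin.is_lt _) hS'k
    have hτinj : ∀ v ∈ S', ∀ w ∈ S', τ v = τ w → v = w := by
      intro v hv w hw hvw
      rw [hτdef] at hvw
      simp only [dif_pos hv, dif_pos hw] at hvw
      have h1 : S'.equivFin ⟨v, hv⟩ = S'.equivFin ⟨w, hw⟩ := Fin.ext hvw
      have h2 := S'.equivFin.injective h1
      exact congrArg Subtype.val h2
    have hvnD : ∀ v ∈ S', v ∉ D := fun v hv => (Finset.mem_sdiff.mp hv).2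
    have hvS : ∀ v ∈ S', v ∈ S := fun v hv => (Finset.mem_sdiff.mp hv).1
    have hτcard : ∀ v ∈ S', τ v < (DvSet G D v).card :=
      fun v hv => lt_of_lt_of_le (hτlt v hv) (hDvcard v (hvnD v hv))
    set dv : V → V := fun v => nbr G D v (τ v) with hdvdef
    have hdvmem : ∀ v ∈ S', dv v ∈ DvSet G D v := fun v hv => nbr_mem G D v (hτcard v hv)
    have hdvD : ∀ v ∈ S', dv v ∈ D := fun v hv => (hDvAdj _ _ (hdvmem v hv)).1
    have hdvAdj : ∀ v ∈ S', G.Adj v (dv v) := fun v hv => (hDvAdj _ _ (hdvmem v hv)).2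
    have hposdv : ∀ v ∈ S', posIn G D v (dv v) = τ v := fun v hv => posIn_nbr G D v (hτcard v hv)
    have pick_val : ∀ v ∈ S', c (s(v, dv v)) = (n - 1) + τ v := by
      intro v hv
      rw [cross_val v (dv v) (hvnD v hv) (hdvD v hv)]
      simp only [ccAux]
      rw [hposdv v hv, if_pos (hτlt v hv)]
    let W : G.Subgraph :=
      { verts := ↑D ∪ ↑S
        Adj := fun a b =>
          (∃ i, 0 < i ∧ i < n ∧ ((a = g i ∧ b = g (prev i)) ∨ (b = g i ∧ a = g (prev i)))) ∨
          (a ∈ S' ∧ b = dv a) ∨ (b ∈ S' ∧ a = dv b)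
        adj_sub := by
          rintro a b (⟨i, hi0, hin, ⟨rfl, rfl⟩ | ⟨rfl, rfl⟩⟩ | ⟨hv, rfl⟩ | ⟨hv, rfl⟩)
          · exact (hprev i hi0 hin).2
          · exact (hprev i hi0 hin).2.symm
          · exact hdvAdj a hv
          · exact (hdvAdj b hv).symm
        edge_vert := by
          rintro a b (⟨i, hi0, hin, ⟨rfl, rfl⟩ | ⟨rfl, rfl⟩⟩ | ⟨hv, rfl⟩ | ⟨hv, rfl⟩)
          · exact Or.inl (hgD i hin)
          · exact Or.inl (hgD (prev i) (lt_trans (hprev i hi0 hin).1 hin))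
          · exact Or.inr (hvS a hv)
          · exact Or.inl (hdvD b hv)
        symm := by
          refine ⟨?_⟩
          rintro a b (⟨i, hi0, hin, hor⟩ | h | h)
          · exact Or.inl ⟨i, hi0, hin, hor.symm⟩
          · exact Or.inr (Or.inr h)
          · exact Or.inr (Or.inl h) }
    have hWadj : ∀ a b, W.Adj a b ↔
        ((∃ i, 0 < i ∧ i < n ∧ ((a = g i ∧ b = g (prev i)) ∨ (b = g i ∧ a = g (prev i)))) ∨
          (a ∈ S' ∧ b = dv a) ∨ (b ∈ S' ∧ a = dv b)) := fun a b => Iff.rfl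
    have hroot : (g 0) ∈ W.verts := Or.inl (hgD 0 hnpos)
    have reachD : ∀ i, ∀ hi : i < n,
        W.coe.Reachable ⟨g i, Or.inl (hgD i hi)⟩ ⟨g 0, hroot⟩ := by
      intro i
      induction i using Nat.strong_induction_on with
      | _ i ih =>
        intro hi
        rcases Nat.eq_zero_or_pos i with rfl | hi0
        · exact Reachable.refl _
        · have hp := hprev i hi0 hi
          have hpi : prev i < n := lt_trans hp.1 hi
          have hadj : W.coe.Adj ⟨g i, Or.inl (hgD i hi)⟩ ⟨g (prev i), Or.inl (hgD _ hpi)⟩ :=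
            Or.inl ⟨i, hi0, hi, Or.inl ⟨rfl, rfl⟩⟩
          exact hadj.reachable.trans (ih (prev i) hp.1 hpi)
    have reachMem : ∀ a, a ∈ D → ∀ hmem : a ∈ W.verts,
        W.coe.Reachable ⟨a, hmem⟩ ⟨g 0, hroot⟩ := by
      intro a haD hmem
      obtain ⟨i, hi, hlj⟩ := List.getElem_of_mem (List.mem_toFinset.mp (hlD ▸ haD))
      have hag : a = g i := ((hgeq i hi).trans hlj).symm
      subst hag
      exact reachD i hi
    have reachAll : ∀ z : W.verts, W.coe.Reachable z ⟨g 0, hroot⟩ := by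
      rintro ⟨a, ha⟩
      by_cases haD : a ∈ D
      · exact reachMem a haD ha
      · have haS : a ∈ S := by
          rcases ha with h | h
          · exact absurd h haD
          · exact h
        have haS' : a ∈ S' := Finset.mem_sdiff.mpr ⟨haS, haD⟩
        have hadj : W.coe.Adj ⟨a, ha⟩ ⟨dv a, Or.inl (hdvD a haS')⟩ :=
          Or.inr (Or.inl ⟨haS', rfl⟩)
        exact hadj.reachable.trans (reachMem (dv a) (hdvD a haS') _)
    refine ⟨W, ?_, ?_, ?_⟩
    · rw [Subgraph.connected_iff', connected_iff_exists_forall_reachable]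
      exact ⟨⟨g 0, hroot⟩, fun w => (reachAll w).symm⟩
    · intro x hx
      exact Or.inr hx
    · have edge_char : ∀ a b, W.Adj a b →
          (∃ i, 0 < i ∧ i < n ∧ s(a, b) = s(g i, g (prev i))) ∨
          (∃ v ∈ S', s(a, b) = s(v, dv v)) := by
        rintro a b (⟨i, hi0, hin, ⟨rfl, rfl⟩ | ⟨rfl, rfl⟩⟩ | ⟨hv, rfl⟩ | ⟨hv, rfl⟩)
        · exact Or.inl ⟨i, hi0, hin, rfl⟩
        · exact Or.inl ⟨i, hi0, hin, Sym2.eq_swap⟩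
        · exact Or.inr ⟨a, hv, rfl⟩
        · exact Or.inr ⟨b, hv, Sym2.eq_swap⟩
      intro e he e' he' hce
      revert he he' hce
      induction e using Sym2.ind with
      | _ a b =>
        induction e' using Sym2.ind with
        | _ a' b' =>
          intro he he' hce
          have h1 := edge_char a b (Subgraph.mem_edgeSet.mp he)
          have h2 := edge_char a' b' (Subgraph.mem_edgeSet.mp he')
          rcases h1 with ht | ⟨v, hv, hev⟩
          · rcases h2 with ht' | ⟨v', hv', hev'⟩
            · obtain ⟨i, hi0, hin, hei, hci⟩ := tree_val _ ht
              obtain ⟨i', hi0', hin', hei', hci'⟩ := tree_val _ ht'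
              rw [hci, hci'] at hce
              have : i = i' := by omega
              rw [hei, this, ← hei']
            · rw [hev'] at hce
              obtain ⟨i, hi0, hin, _, hci⟩ := tree_val _ ht
              rw [hci, pick_val v' hv'] at hce
              omega
          · rcases h2 with ht' | ⟨v', hv', hev'⟩
            · rw [hev] at hce
              obtain ⟨i, hi0, hin, _, hci⟩ := tree_val _ ht'
              rw [hci, pick_val v hv] at hce
              omega
            · rw [hev, hev'] at hce ⊢
              rw [pick_val v hv, pick_val v' hv'] at hce
              have : v = v' := hτinj v hv v' hv' (by omega)
              rw [this]
  have hmem : (D.card + k - 1) ∈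
      {m | ∃ c : Sym2 V → ℕ, (∀ e ∈ G.edgeSet, c e < m) ∧ IsKRainbowColoring G k c} :=
    ⟨c, hbound, hrainbow⟩
  exact Nat.sInf_le hmem

theorem stmt9 {V : Type*} [Fintype V] (G : SimpleGraph V) (hG : G.Connected)
    (k : ℕ) (hk : 2 ≤ k) (D : Finset V) (hD : IsConnKDom G k D) :
    rxk G k ≤ D.card + k - 1 ∧ rxk G k ≤ gammakc G k + k - 1 := by
  refine ⟨rxk_le_of_connKDom G k hk D hD, ?_⟩
  have hne : {m | ∃ D' : Finset V, D'.card = m ∧ IsConnKDom G k D'}.Nonempty :=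
    ⟨D.card, D, rfl, hD⟩
  obtain ⟨D', hD'card, hD'⟩ := Nat.sInf_mem hne
  have := rxk_le_of_connKDom G k hk D' hD'
  rw [hD'card] at this
  exact this
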